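/- For a, b, γ > 0, the regularized double integral I = ∫_{−a}^{a} ∫_{−b}^{b} (γ/π) / (r²s² + γ²) ds dr equals (4/π) Ti₂(ab/γ), where Ti₂(x) = ∫₀^x (arctan u)/u du is the inverse tangent integral. Consequently I ~ 2 ln(ab/γ) as γ/(ab) → 0. -/

import Mathlib

open Real Filter MeasureTheory

lemma abs_arctan_le_abs (x : ℝ) : |Real.arctan x| ≤ |x| := by
  have key : ∀ y : ℝ, 0 ≤ y → Real.arctan y ≤ y := by
    intro y hy
    have hdiff : Differentiable ℝ (fun u : ℝ => u - Real.arctan u) :=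
      differentiable_id.sub Real.differentiable_arctan
    have hmono : Monotone (fun u : ℝ => u - Real.arctan u) := by
      apply monotone_of_deriv_nonneg hdiff
      intro u
      have h : HasDerivAt (fun u : ℝ => u - Real.arctan u) (1 - 1 / (1 + u ^ 2)) u :=
        (hasDerivAt_id u).sub (Real.hasDerivAt_arctan u)
      rw [h.deriv]
      have : 1 / (1 + u ^ 2) ≤ 1 := by
        rw [div_le_one (by positivity)]; nlinarith [sq_nonneg u]
      linarith
    have := hmono hy
    simpa using this
  rcases le_or_gt 0 x with h | h
  · have h0 : 0 ≤ Real.arctan x := by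
      rw [← Real.arctan_zero]; exact Real.arctan_strictMono.monotone h
    rw [abs_of_nonneg h0, abs_of_nonneg h]; exact key x h
  · have h0 : Real.arctan x < 0 := by
      rw [← Real.arctan_zero]; exact Real.arctan_strictMono h
    rw [abs_of_neg h0, abs_of_neg h]
    have := key (-x) (by linarith)
    rw [Real.arctan_neg] at this; linarith

lemma abs_arctan_div_le_one (u : ℝ) : |Real.arctan u / u| ≤ 1 := by
  rcases eq_or_ne u 0 with h | h
  · simp [h]
  · rw [abs_div, div_le_one (abs_pos.mpr h)]; exact abs_arctan_le_abs u

lemma arctan_div_measurable : Measurable (fun u : ℝ => Real.arctan u / u) :=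
  Real.continuous_arctan.measurable.div measurable_id

lemma arctan_div_intervalIntegrable (c d : ℝ) :
    IntervalIntegrable (fun u : ℝ => Real.arctan u / u) volume c d := by
  rw [intervalIntegrable_iff]
  have hconst : IntegrableOn (fun _ : ℝ => (1 : ℝ)) (Set.uIoc c d) volume :=
    integrableOn_const measure_Ioc_lt_top.ne
  exact hconst.mono' arctan_div_measurable.aestronglyMeasurable.restrict
    (Filter.Eventually.of_forall fun u =>
      by rw [Real.norm_eq_abs]; exact abs_arctan_div_le_one u)

/-- The inverse tangent integral `Ti₂(x) = ∫₀^x arctan(u)/u du`. -/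
noncomputable def Ti2 (x : ℝ) : ℝ := ∫ u in (0 : ℝ)..x, Real.arctan u / u

lemma Ti2_abs_le (x : ℝ) : |Ti2 x| ≤ |x| := by
  have := intervalIntegral.norm_integral_le_of_norm_le_const
    (C := 1) (f := fun u : ℝ => Real.arctan u / u) (a := (0:ℝ)) (b := x)
    (fun u _ => by rw [Real.norm_eq_abs]; exact abs_arctan_div_le_one u)
  simpa [Ti2, Real.norm_eq_abs] using this

lemma Ti2_hasDerivAt {x : ℝ} (hx : x ≠ 0) : HasDerivAt Ti2 (Real.arctan x / x) x := by
  apply intervalIntegral.integral_hasDerivAt_right (arctan_div_intervalIntegrable 0 x)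
  · exact arctan_div_measurable.stronglyMeasurable.stronglyMeasurableAtFilter
  · exact Real.continuous_arctan.continuousAt.div continuousAt_id hx

lemma Ti2_identity {x : ℝ} (hx : 1 ≤ x) : Ti2 x = Ti2 x⁻¹ + π / 2 * Real.log x := by
  set F : ℝ → ℝ := fun y => Ti2 y - Ti2 y⁻¹ - π / 2 * Real.log y with hF
  have hder : ∀ y : ℝ, 0 < y → HasDerivAt F 0 y := by
    intro y hy
    have h1 := Ti2_hasDerivAt hy.ne'
    have h2 : HasDerivAt (fun y : ℝ => Ti2 y⁻¹)
        ((Real.arctan y⁻¹ / y⁻¹) * (-(y ^ 2)⁻¹)) y :=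
      (Ti2_hasDerivAt (inv_ne_zero hy.ne')).comp y (hasDerivAt_inv hy.ne')
    have h3 : HasDerivAt (fun y : ℝ => π / 2 * Real.log y) (π / 2 * y⁻¹) y := by
      simpa [mul_comm] using (Real.hasDerivAt_log hy.ne').const_mul (π / 2)
    have h4 := (h1.sub h2).sub h3
    convert h4 using 1
    · rfl
    · rfl
    · rfl
    rw [Real.arctan_inv_of_pos hy]
    field_simp
    ring
  have key := constant_of_has_deriv_right_zero
    (f := F) (a := 1) (b := x)
    (fun y hy => ((hder y (lt_of_lt_of_le one_pos hy.1)).continuousAt).continuousWithinAt)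
    (fun y hy => ((hder y (lt_of_lt_of_le one_pos hy.1)).hasDerivWithinAt))
  have hx0 := key x ⟨hx, le_refl x⟩
  have hF1 : F 1 = 0 := by simp [hF]
  rw [hF1] at hx0
  have : Ti2 x - Ti2 x⁻¹ - π / 2 * Real.log x = 0 := hx0
  linarith

lemma inner_integral_eq (b γ : ℝ) (hγ : 0 < γ) (r : ℝ) (hr : r ≠ 0) :
    (∫ s in (-b)..b, (γ / π) / (r ^ 2 * s ^ 2 + γ ^ 2))
      = 2 / π * (Real.arctan (r * b / γ) / r) := by
  have hπ : (π : ℝ) ≠ 0 := Real.pi_ne_zero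
  have hd : ∀ s : ℝ, HasDerivAt (fun s : ℝ => 1 / (π * r) * Real.arctan (r * s / γ))
      ((γ / π) / (r ^ 2 * s ^ 2 + γ ^ 2)) s := by
    intro s
    have h1 : HasDerivAt (fun s : ℝ => r * s / γ) (r / γ) s := by
      simpa using ((hasDerivAt_id s).const_mul r).div_const γ
    have h2 := ((Real.hasDerivAt_arctan (r * s / γ)).comp s h1).const_mul (1 / (π * r))
    convert h2 using 1
    · rfl
    · rfl
    · rfl
    have hden : r ^ 2 * s ^ 2 + γ ^ 2 ≠ 0 := by positivity
    have hden2 : 1 + (r * s / γ) ^ 2 ≠ 0 := by positivity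
    field_simp
    ring
  have hcont : Continuous (fun s : ℝ => (γ / π) / (r ^ 2 * s ^ 2 + γ ^ 2)) := by
    apply continuous_const.div (by continuity)
    intro s; positivity
  rw [intervalIntegral.integral_eq_sub_of_hasDerivAt (fun s _ => hd s)
    (hcont.intervalIntegrable _ _)]
  have : r * -b / γ = -(r * b / γ) := by ring
  rw [this, Real.arctan_neg]
  field_simp
  ring

lemma main_eq (a b γ : ℝ) (hb : 0 < b) (hγ : 0 < γ) :
    (∫ r in (-a)..a, ∫ s in (-b)..b, (γ / π) / (r ^ 2 * s ^ 2 + γ ^ 2))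
      = 4 / π * Ti2 (a * b / γ) := by
  have hπ : (π : ℝ) ≠ 0 := Real.pi_ne_zero
  set c : ℝ := b / γ with hc
  have hc0 : 0 < c := div_pos hb hγ
  have hcne : c ≠ 0 := hc0.ne'
  have hae : ∀ᵐ r : ℝ, r ≠ 0 := by
    have hset : {r : ℝ | ¬r ≠ 0} = {0} := by ext r; simp
    rw [ae_iff, hset]
    exact measure_singleton 0
  have step1 : (∫ r in (-a)..a, ∫ s in (-b)..b, (γ / π) / (r ^ 2 * s ^ 2 + γ ^ 2))
      = ∫ r in (-a)..a, 2 / π * c * (Real.arctan (r * c) / (r * c)) := by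
    apply intervalIntegral.integral_congr_ae
    filter_upwards [hae] with r hr _
    rw [inner_integral_eq b γ hγ r hr]
    have harg : r * b / γ = r * c := by rw [hc]; ring
    rw [harg]
    field_simp
  rw [step1]
  rw [intervalIntegral.integral_const_mul]
  have step2 : (∫ r in (-a)..a, Real.arctan (r * c) / (r * c))
      = c⁻¹ * ∫ u in ((-a) * c)..(a * c), Real.arctan u / u := by
    rw [intervalIntegral.integral_comp_mul_right (fun u => Real.arctan u / u) hcne]
    simp [smul_eq_mul]
  rw [step2]
  have heven : ∀ u : ℝ, Real.arctan (-u) / (-u) = Real.arctan u / u := by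
    intro u; rw [Real.arctan_neg, neg_div_neg_eq]
  have hneg : (-a) * c = -(a * c) := by ring
  rw [hneg]
  have h1 : (∫ u in (-(a * c))..(0 : ℝ), Real.arctan u / u) = Ti2 (a * c) := by
    have h := intervalIntegral.integral_comp_neg (a := (0 : ℝ)) (b := a * c)
      (fun u => Real.arctan u / u)
    simp only [neg_zero] at h
    rw [← h]
    simp_rw [heven]
    rfl
  have hsplit : (∫ u in (-(a * c))..(a * c), Real.arctan u / u) = 2 * Ti2 (a * c) := by
    rw [← intervalIntegral.integral_add_adjacent_intervals
      (arctan_div_intervalIntegrable (-(a * c)) 0) (arctan_div_intervalIntegrable 0 (a * c)),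
      h1]
    unfold Ti2; ring
  rw [hsplit]
  have hac : a * c = a * b / γ := by rw [hc]; ring
  rw [hac]
  field_simp
  ring

/-- The regularized double integral `∫∫ δ_γ(rs)` over `[−a,a]×[−b,b]` equals
`(4/π) Ti₂(ab/γ)`, and behaves like `2 ln(ab/γ)` as `γ → 0⁺`. -/
theorem stmt15 (a b : ℝ) (ha : 0 < a) (hb : 0 < b) :
    (∀ γ : ℝ, 0 < γ →
      (∫ r in (-a)..a, ∫ s in (-b)..b, (γ / π) / (r ^ 2 * s ^ 2 + γ ^ 2))
        = 4 / π * Ti2 (a * b / γ)) ∧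
    Tendsto (fun γ : ℝ =>
        (∫ r in (-a)..a, ∫ s in (-b)..b, (γ / π) / (r ^ 2 * s ^ 2 + γ ^ 2))
          / (2 * Real.log (a * b / γ)))
      (nhdsWithin 0 (Set.Ioi 0)) (nhds 1) := by
  have hπ : (π : ℝ) ≠ 0 := Real.pi_ne_zero
  refine ⟨fun γ hγ => main_eq a b γ hb hγ, ?_⟩
  have hc : 0 < a * b := mul_pos ha hb
  set c : ℝ := a * b with hcdef
  -- the model function
  have h1 : Tendsto (fun γ : ℝ => Ti2 (γ / c)) (nhdsWithin 0 (Set.Ioi 0)) (nhds 0) := by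
    have t0 : Tendsto (fun γ : ℝ => |γ / c|) (nhdsWithin 0 (Set.Ioi 0)) (nhds 0) := by
      have t1 : Tendsto (fun γ : ℝ => γ / c) (nhds 0) (nhds 0) := by
        simpa using (continuous_id.div_const c).tendsto 0
      simpa using (t1.abs).mono_left nhdsWithin_le_nhds
    exact squeeze_zero_norm (fun γ => by rw [Real.norm_eq_abs]; exact Ti2_abs_le _) t0
  have h2 : Tendsto (fun γ : ℝ => (Real.log (c / γ))⁻¹)
      (nhdsWithin 0 (Set.Ioi 0)) (nhds 0) := by
    have htop : Tendsto (fun γ : ℝ => c / γ) (nhdsWithin 0 (Set.Ioi 0)) atTop := by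
      simp_rw [div_eq_mul_inv]
      exact tendsto_inv_nhdsGT_zero.const_mul_atTop hc
    exact (Real.tendsto_log_atTop.comp htop).inv_tendsto_atTop
  have hT : Tendsto (fun γ : ℝ => 1 + 2 / π * (Ti2 (γ / c) * (Real.log (c / γ))⁻¹))
      (nhdsWithin 0 (Set.Ioi 0)) (nhds 1) := by
    have := ((h1.mul h2).const_mul (2 / π)).const_add 1
    simpa using this
  apply hT.congr'
  filter_upwards [Ioo_mem_nhdsGT_of_mem (Set.left_mem_Ico.mpr hc)] with γ hγ
  obtain ⟨hγ0, hγc⟩ := hγ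
  have hx : 1 < c / γ := (one_lt_div hγ0).mpr hγc
  have hlog : 0 < Real.log (c / γ) := Real.log_pos hx
  rw [main_eq a b γ hb hγ0]
  have hid : Ti2 (c / γ) = Ti2 (γ / c) + π / 2 * Real.log (c / γ) := by
    have := Ti2_identity hx.le
    rwa [inv_div] at this
  rw [hcdef] at hid ⊢
  rw [hid]
  have hlog' : Real.log (a * b / γ) ≠ 0 := hlog.ne'
  field_simp
  ring
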